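/- The exact stabilization order is n* = 𝒩[S] − 𝒩[J], where J = {μ ∈ S : ⟨i|H|j⟩ = 0 for all eigenvector pairs with p_i ≠ p_j and p_i + p_j = μ}; i.e., n* equals the number of distinct eigenvalue-pair sums μ for which H has a nonzero matrix element between the corresponding eigenspaces. -/

import Mathlib

open Matrix BigOperators Finset
open scoped Classical

namespace KST

variable {d : ℕ}

/-- Weighted inner product ⟨X,Y⟩_ρ = Re tr(ρ(XY+YX))/2. -/
noncomputable def wip (ρ X Y : Matrix (Fin d) (Fin d) ℂ) : ℝ :=
  (((ρ * (X * Y + Y * X)).trace) / 2).re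

/-- Membership in 𝒳: Hermitian with ⟨k|X|l⟩ = 0 whenever p_k = p_l = 0. -/
def memX (p : Fin d → ℝ) (v : Fin d → (Fin d → ℂ)) (X : Matrix (Fin d) (Fin d) ℂ) : Prop :=
  X.IsHermitian ∧ ∀ k l, p k = 0 → p l = 0 → star (v k) ⬝ᵥ X.mulVec (v l) = 0

/-- The superoperator R_ρ(X) = (ρX + Xρ)/2. -/
noncomputable def Rop (ρ : Matrix (Fin d) (Fin d) ℂ) (X : Matrix (Fin d) (Fin d) ℂ) :
    Matrix (Fin d) (Fin d) ℂ :=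
  (1/2 : ℂ) • (ρ * X + X * ρ)

/-- The operator i[ρ,H]. -/
noncomputable def comm (ρ H : Matrix (Fin d) (Fin d) ℂ) : Matrix (Fin d) (Fin d) ℂ :=
  Complex.I • (ρ * H - H * ρ)

/-- Krylov subspace 𝒦_n = span_ℝ {R_ρ^k(i[ρ,H]) : 0 ≤ k ≤ n-1}. -/
noncomputable def K (ρ H : Matrix (Fin d) (Fin d) ℂ) (n : ℕ) :
    Submodule ℝ (Matrix (Fin d) (Fin d) ℂ) :=
  Submodule.span ℝ ((fun k => (Rop ρ)^[k] (comm ρ H)) '' (Set.Iio n))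

/-- Quantum Fisher information (spectral formula). -/
noncomputable def FQ (p : Fin d → ℝ) (v : Fin d → (Fin d → ℂ))
    (H : Matrix (Fin d) (Fin d) ℂ) : ℝ :=
  2 * ∑ k, ∑ l, if 0 < p k + p l then
    (p k - p l)^2 / (p k + p l) * Complex.normSq (star (v k) ⬝ᵥ H.mulVec (v l)) else 0

/-- T_k = tr(i[ρ,H] R_ρ^k(i[ρ,H])). -/
noncomputable def Tk (ρ H : Matrix (Fin d) (Fin d) ℂ) (k : ℕ) : ℝ :=
  ((comm ρ H * (Rop ρ)^[k] (comm ρ H)).trace).re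

/-- P is the orthogonal projection of L onto 𝒦_n w.r.t. ⟨·,·⟩_ρ. -/
def IsProj (ρ H : Matrix (Fin d) (Fin d) ℂ) (n : ℕ)
    (L P : Matrix (Fin d) (Fin d) ℂ) : Prop :=
  P ∈ K ρ H n ∧ ∀ Y ∈ K ρ H n, wip ρ (L - P) Y = 0

noncomputable def Eij (v : Fin d → Fin d → ℂ) (i j : Fin d) : Matrix (Fin d) (Fin d) ℂ :=
  vecMulVec (v i) (star (v j))

lemma vmv_mul_vmv (a b c e : Fin d → ℂ) :
    vecMulVec a b * vecMulVec c e = (b ⬝ᵥ c) • vecMulVec a e := by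
  ext x y
  simp only [Matrix.mul_apply, vecMulVec_apply, Matrix.smul_apply, dotProduct, smul_eq_mul,
    Finset.sum_mul]
  exact Finset.sum_congr rfl fun m _ => by ring

lemma complete (v : Fin d → Fin d → ℂ)
    (horth : ∀ k l, star (v k) ⬝ᵥ v l = (if k = l then 1 else 0)) :
    ∑ k, Eij v k k = 1 := by
  let U : Matrix (Fin d) (Fin d) ℂ := Matrix.of fun x k => v k x
  have h1 : Uᴴ * U = 1 := by
    ext k l
    simp only [Matrix.mul_apply, conjTranspose_apply, Matrix.one_apply, U, Matrix.of_apply]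
    have := horth k l
    simpa [dotProduct] using this
  have h2 : U * Uᴴ = 1 := mul_eq_one_comm.mp h1
  calc ∑ k, Eij v k k = U * Uᴴ := by
        ext x y
        simp [Eij, Matrix.sum_apply, vecMulVec_apply, Matrix.mul_apply, conjTranspose_apply, U]
    _ = 1 := h2


lemma sandwich (v : Fin d → Fin d → ℂ) (X : Matrix (Fin d) (Fin d) ℂ) (i j : Fin d) :
    Eij v i i * X * Eij v j j = (star (v i) ⬝ᵥ X.mulVec (v j)) • Eij v i j := by
  ext x y
  simp only [Matrix.mul_apply, Eij, vecMulVec_apply, Matrix.smul_apply, dotProduct, mulVec,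
    smul_eq_mul, Pi.star_apply, Finset.sum_mul, Finset.mul_sum]
  rw [Finset.sum_comm]
  refine Finset.sum_congr rfl fun m _ => Finset.sum_congr rfl fun n _ => by ring

lemma decompose (v : Fin d → Fin d → ℂ)
    (horth : ∀ k l, star (v k) ⬝ᵥ v l = (if k = l then 1 else 0))
    (X : Matrix (Fin d) (Fin d) ℂ) :
    X = ∑ i, ∑ j, (star (v i) ⬝ᵥ X.mulVec (v j)) • Eij v i j := by
  have h := complete v horth
  calc X = (∑ i, Eij v i i) * X * (∑ j, Eij v j j) := by rw [h]; simp
    _ = ∑ i, ∑ j, Eij v i i * X * Eij v j j := by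
        rw [Finset.sum_mul, Finset.sum_mul]
        refine Finset.sum_congr rfl fun i _ => ?_
        rw [Finset.mul_sum]
    _ = _ := Finset.sum_congr rfl fun i _ => Finset.sum_congr rfl fun j _ => sandwich v X i j


section Act
variable (ρ : Matrix (Fin d) (Fin d) ℂ) (p : Fin d → ℝ) (v : Fin d → Fin d → ℂ)
  (hρ : ρ = ∑ k, (p k : ℂ) • vecMulVec (v k) (star (v k)))
  (horth : ∀ k l, star (v k) ⬝ᵥ v l = (if k = l then 1 else 0))

include hρ horth in
lemma rho_mul_E (i j : Fin d) : ρ * Eij v i j = (p i : ℂ) • Eij v i j := by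
  rw [hρ, Finset.sum_mul]
  have : ∀ k, ((p k : ℂ) • vecMulVec (v k) (star (v k))) * Eij v i j
      = (if k = i then (p i : ℂ) • Eij v i j else 0) := by
    intro k
    rw [Matrix.smul_mul, Eij, vmv_mul_vmv, horth k i]
    by_cases h : k = i <;> simp [h, Eij]
  rw [Finset.sum_congr rfl fun k _ => this k]
  simp

include hρ horth in
lemma E_mul_rho (i j : Fin d) : Eij v i j * ρ = (p j : ℂ) • Eij v i j := by
  rw [hρ, Finset.mul_sum]
  have : ∀ k, Eij v i j * ((p k : ℂ) • vecMulVec (v k) (star (v k)))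
      = (if j = k then (p j : ℂ) • Eij v i j else 0) := by
    intro k
    rw [Matrix.mul_smul, Eij, vmv_mul_vmv, horth j k]
    by_cases h : j = k <;> simp [h, Eij]
  rw [Finset.sum_congr rfl fun k _ => this k]
  simp

include hρ horth in
lemma Rop_E (i j : Fin d) :
    Rop ρ (Eij v i j) = (((p i + p j) / 2 : ℝ) : ℂ) • Eij v i j := by
  rw [Rop, rho_mul_E ρ p v hρ horth, E_mul_rho ρ p v hρ horth, ← add_smul, ← smul_assoc]
  congr 1
  push_cast
  simp [smul_eq_mul]
  ring

lemma Rop_sum {α : Type*} (ρ : Matrix (Fin d) (Fin d) ℂ) (s : Finset α)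
    (f : α → Matrix (Fin d) (Fin d) ℂ) :
    Rop ρ (∑ a ∈ s, f a) = ∑ a ∈ s, Rop ρ (f a) := by
  simp [Rop, Finset.mul_sum, Finset.sum_mul, ← Finset.sum_add_distrib, Finset.smul_sum]

lemma Rop_smul (ρ : Matrix (Fin d) (Fin d) ℂ) (z : ℂ) (X : Matrix (Fin d) (Fin d) ℂ) :
    Rop ρ (z • X) = z • Rop ρ X := by
  simp only [Rop, Matrix.mul_smul, Matrix.smul_mul, ← smul_add, smul_comm z]

include hρ horth in
lemma iter_formula (H : Matrix (Fin d) (Fin d) ℂ) (n : ℕ) :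
    (Rop ρ)^[n] (comm ρ H) =
      ∑ i, ∑ j, ((((p i + p j) / 2 : ℝ) : ℂ) ^ n *
        (Complex.I * ((p i : ℂ) - (p j : ℂ)) * (star (v i) ⬝ᵥ H.mulVec (v j)))) • Eij v i j := by
  induction n with
  | zero =>
    have hH0 := decompose v horth H
    have hρH : ρ * H = ∑ i, ∑ j,
        ((p i : ℂ) * (star (v i) ⬝ᵥ H.mulVec (v j))) • Eij v i j := by
      conv_lhs => rw [hH0]
      rw [Finset.mul_sum]
      refine Finset.sum_congr rfl fun i _ => ?_
      rw [Finset.mul_sum]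
      refine Finset.sum_congr rfl fun j _ => ?_
      rw [Matrix.mul_smul, rho_mul_E ρ p v hρ horth, smul_smul, mul_comm]
    have hHρ : H * ρ = ∑ i, ∑ j,
        ((p j : ℂ) * (star (v i) ⬝ᵥ H.mulVec (v j))) • Eij v i j := by
      conv_lhs => rw [hH0]
      rw [Finset.sum_mul]
      refine Finset.sum_congr rfl fun i _ => ?_
      rw [Finset.sum_mul]
      refine Finset.sum_congr rfl fun j _ => ?_
      rw [Matrix.smul_mul, E_mul_rho ρ p v hρ horth, smul_smul, mul_comm]
    rw [Function.iterate_zero_apply, comm, hρH, hHρ, ← Finset.sum_sub_distrib,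
      Finset.smul_sum]
    refine Finset.sum_congr rfl fun i _ => ?_
    rw [← Finset.sum_sub_distrib, Finset.smul_sum]
    refine Finset.sum_congr rfl fun j _ => ?_
    rw [← sub_smul, smul_smul]
    congr 1
    ring
  | succ n ih =>
    rw [Function.iterate_succ_apply', ih, Rop_sum]
    refine Finset.sum_congr rfl fun i _ => ?_
    rw [Rop_sum]
    refine Finset.sum_congr rfl fun j _ => ?_
    rw [Rop_smul, Rop_E ρ p v hρ horth, smul_smul]
    congr 1
    ring

end Act


noncomputable def phi (v : Fin d → Fin d → ℂ) (i j : Fin d)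
    (X : Matrix (Fin d) (Fin d) ℂ) : ℂ :=
  star (v i) ⬝ᵥ X.mulVec (v j)

lemma phi_add (v : Fin d → Fin d → ℂ) (i j : Fin d) (X Y : Matrix (Fin d) (Fin d) ℂ) :
    phi v i j (X + Y) = phi v i j X + phi v i j Y := by
  simp [phi, Matrix.add_mulVec, dotProduct_add]

lemma phi_zero (v : Fin d → Fin d → ℂ) (i j : Fin d) :
    phi v i j (0 : Matrix (Fin d) (Fin d) ℂ) = 0 := by
  simp [phi]

lemma phi_sum {α : Type*} (v : Fin d → Fin d → ℂ) (i j : Fin d) (s : Finset α)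
    (f : α → Matrix (Fin d) (Fin d) ℂ) :
    phi v i j (∑ a ∈ s, f a) = ∑ a ∈ s, phi v i j (f a) := by
  induction s using Finset.induction with
  | empty => simp [phi_zero]
  | insert _ _ hnot ih =>
    rw [Finset.sum_insert hnot, Finset.sum_insert hnot, phi_add, ih]

lemma phi_csmul (v : Fin d → Fin d → ℂ) (i j : Fin d) (z : ℂ)
    (X : Matrix (Fin d) (Fin d) ℂ) :
    phi v i j (z • X) = z * phi v i j X := by
  simp [phi, dotProduct, mulVec, Finset.mul_sum]
  refine Finset.sum_congr rfl fun m _ => Finset.sum_congr rfl fun n _ => by ring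

lemma rsmul_eq_csmul (r : ℝ) (X : Matrix (Fin d) (Fin d) ℂ) :
    r • X = ((r : ℂ)) • X := by
  have h : (r : ℂ) = r • (1 : ℂ) := by simp
  rw [h, smul_one_smul]

lemma phi_rsmul (v : Fin d → Fin d → ℂ) (i j : Fin d) (r : ℝ)
    (X : Matrix (Fin d) (Fin d) ℂ) :
    phi v i j (r • X) = (r : ℂ) * phi v i j X := by
  rw [rsmul_eq_csmul, phi_csmul]

lemma phi_E (v : Fin d → Fin d → ℂ)
    (horth : ∀ k l, star (v k) ⬝ᵥ v l = (if k = l then 1 else 0)) (i j k l : Fin d) :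
    phi v i j (Eij v k l) = (if i = k then 1 else 0) * (if l = j then 1 else 0) := by
  have : phi v i j (Eij v k l) = (star (v i) ⬝ᵥ v k) * (star (v l) ⬝ᵥ v j) := by
    simp only [phi, Eij, dotProduct, mulVec, vecMulVec_apply, Pi.star_apply, Finset.sum_mul,
      Finset.mul_sum]
    rw [Finset.sum_comm]
    refine Finset.sum_congr rfl fun m _ => Finset.sum_congr rfl fun n _ => by ring
  rw [this, horth, horth]


section Act2
variable (ρ : Matrix (Fin d) (Fin d) ℂ) (p : Fin d → ℝ) (v : Fin d → Fin d → ℂ)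
  (hρ : ρ = ∑ k, (p k : ℂ) • vecMulVec (v k) (star (v k)))
  (horth : ∀ k l, star (v k) ⬝ᵥ v l = (if k = l then 1 else 0))

include hρ horth in
lemma phi_iter (H : Matrix (Fin d) (Fin d) ℂ) (n : ℕ) (i j : Fin d) :
    phi v i j ((Rop ρ)^[n] (comm ρ H)) =
      (((p i + p j) / 2 : ℝ) : ℂ) ^ n *
        (Complex.I * ((p i : ℂ) - (p j : ℂ)) * (star (v i) ⬝ᵥ H.mulVec (v j))) := by
  rw [iter_formula ρ p v hρ horth H n]
  simp only [phi_sum, phi_csmul, phi_E v horth, mul_ite, mul_one, mul_zero, ite_mul, zero_mul]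
  rw [Finset.sum_eq_single i]
  · rw [Finset.sum_eq_single j]
    · simp
    · intro b _ hb
      simp [hb]
    · simp
  · intro b _ hb
    simp [Ne.symm hb]
  · simp

end Act2

/-- Exact stabilization order: n* = 𝒩[S] − 𝒩[J]. -/
theorem stmt13 {d : ℕ} (ρ : Matrix (Fin d) (Fin d) ℂ) (p : Fin d → ℝ) (v : Fin d → (Fin d → ℂ))
    (hρ : ρ = ∑ k, (p k : ℂ) • vecMulVec (v k) (star (v k)))
    (horth : ∀ k l, star (v k) ⬝ᵥ v l = (if k = l then 1 else 0))
    (hppos : ∀ k, 0 ≤ p k) (hptr : ∑ k, p k = 1) (H : Matrix (Fin d) (Fin d) ℂ) (hH : H.IsHermitian)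
    (nstar : ℕ) (hstar : IsLeast {n : ℕ | K ρ H (n + 1) = K ρ H n} nstar) :
    nstar =
      ((Finset.univ.filter fun kl : Fin d × Fin d => p kl.1 ≠ p kl.2).image
        fun kl => p kl.1 + p kl.2).card -
      (((Finset.univ.filter fun kl : Fin d × Fin d => p kl.1 ≠ p kl.2).image
        fun kl => p kl.1 + p kl.2).filter fun μ =>
          ∀ i j, p i ≠ p j → p i + p j = μ →
            star (v i) ⬝ᵥ H.mulVec (v j) = 0).card := by
  classical
  set c : Fin d → Fin d → ℂ := fun i j => star (v i) ⬝ᵥ H.mulVec (v j) with hc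
  set A : Finset (Fin d × Fin d) :=
    Finset.univ.filter (fun a : Fin d × Fin d => p a.1 ≠ p a.2 ∧ c a.1 a.2 ≠ 0) with hA
  set Φ : Finset ℝ := A.image (fun a => (p a.1 + p a.2) / 2) with hΦ
  set N : ℕ := Φ.card with hN
  have hwzero : ∀ i j, ¬(p i ≠ p j ∧ c i j ≠ 0) →
      Complex.I * ((p i : ℂ) - (p j : ℂ)) * c i j = 0 := by
    intro i j h
    by_cases hpe : p i = p j
    · simp [hpe]
    · push_neg at h
      simp [h hpe]
  have hwne : ∀ i j, p i ≠ p j → c i j ≠ 0 →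
      Complex.I * ((p i : ℂ) - (p j : ℂ)) * c i j ≠ 0 := by
    intro i j h1 h2
    refine mul_ne_zero (mul_ne_zero Complex.I_ne_zero ?_) h2
    rw [sub_ne_zero]
    exact_mod_cast h1
  -- upper bound: K (N+1) = K N
  have hupper : K ρ H (N + 1) = K ρ H N := by
    set Q : Polynomial ℝ := ∏ μ ∈ Φ, (Polynomial.X - Polynomial.C μ) with hQ
    have hQmonic : Q.Monic :=
      Polynomial.monic_prod_of_monic _ _ fun μ _ => Polynomial.monic_X_sub_C μ
    have hQdeg : Q.natDegree = N := by
      rw [hQ, Polynomial.natDegree_prod _ _ (fun μ _ => Polynomial.X_sub_C_ne_zero μ)]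
      simp [Polynomial.natDegree_X_sub_C, hN]
    have hQroot : ∀ μ ∈ Φ, Q.eval μ = 0 := fun μ hμ => by
      rw [hQ, Polynomial.eval_prod]
      exact Finset.prod_eq_zero hμ (by simp)
    have hco : ∀ (i j : Fin d),
        (((p i + p j) / 2 : ℝ) : ℂ) ^ N *
            (Complex.I * ((p i : ℂ) - (p j : ℂ)) * (star (v i) ⬝ᵥ H.mulVec (v j)))
          = ∑ k ∈ Finset.range N, ((-(Q.coeff k) : ℝ) : ℂ) *
            ((((p i + p j) / 2 : ℝ) : ℂ) ^ k *
              (Complex.I * ((p i : ℂ) - (p j : ℂ)) * (star (v i) ⬝ᵥ H.mulVec (v j)))) := by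
      intro i j
      by_cases hij : p i ≠ p j ∧ star (v i) ⬝ᵥ H.mulVec (v j) ≠ 0
      · have hμ : (p i + p j) / 2 ∈ Φ := Finset.mem_image.mpr
          ⟨(i, j), Finset.mem_filter.mpr ⟨Finset.mem_univ _, hij⟩, rfl⟩
        have h0 := hQroot _ hμ
        set x : ℝ := (p i + p j) / 2 with hx
        have h1 : Q.eval x = ∑ k ∈ Finset.range (N + 1), Q.coeff k * x ^ k := by
          rw [Polynomial.eval_eq_sum_range, hQdeg]
        have hcN : Q.coeff N = 1 := by
          rw [← hQdeg]
          exact hQmonic.coeff_natDegree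
        rw [h0, Finset.sum_range_succ, hcN, one_mul] at h1
        have hreal : x ^ N = ∑ k ∈ Finset.range N, -(Q.coeff k) * x ^ k := by
          have h3 : x ^ N = -∑ k ∈ Finset.range N, Q.coeff k * x ^ k := by linarith
          rw [h3, ← Finset.sum_neg_distrib]
          exact Finset.sum_congr rfl fun k _ => by ring
        have hcast : ((x : ℝ) : ℂ) ^ N
            = ∑ k ∈ Finset.range N, ((-(Q.coeff k) : ℝ) : ℂ) * ((x : ℝ) : ℂ) ^ k := by
          exact_mod_cast congrArg Complex.ofReal hreal
        rw [hcast, Finset.sum_mul]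
        exact Finset.sum_congr rfl fun k _ => by ring
      · rw [hwzero i j hij]
        simp
    have hMN : (Rop ρ)^[N] (comm ρ H)
        = ∑ k ∈ Finset.range N, (-(Q.coeff k)) • (Rop ρ)^[k] (comm ρ H) := by
      rw [iter_formula ρ p v hρ horth H N]
      have e1 : ∑ k ∈ Finset.range N, (-(Q.coeff k)) • (Rop ρ)^[k] (comm ρ H)
          = ∑ k ∈ Finset.range N, ∑ i, ∑ j, (-(Q.coeff k)) •
              (((((p i + p j) / 2 : ℝ) : ℂ) ^ k *
              (Complex.I * ((p i : ℂ) - (p j : ℂ)) * (star (v i) ⬝ᵥ H.mulVec (v j)))) • Eij v i j) :=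
        Finset.sum_congr rfl fun k _ => by
          rw [iter_formula ρ p v hρ horth H k, Finset.smul_sum]
          exact Finset.sum_congr rfl fun i _ => Finset.smul_sum
      have e2 : ∑ k ∈ Finset.range N, ∑ i, ∑ j, (-(Q.coeff k)) •
              (((((p i + p j) / 2 : ℝ) : ℂ) ^ k *
              (Complex.I * ((p i : ℂ) - (p j : ℂ)) * (star (v i) ⬝ᵥ H.mulVec (v j)))) • Eij v i j)
          = ∑ i, ∑ j, ∑ k ∈ Finset.range N, (-(Q.coeff k)) •
              (((((p i + p j) / 2 : ℝ) : ℂ) ^ k *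
              (Complex.I * ((p i : ℂ) - (p j : ℂ)) * (star (v i) ⬝ᵥ H.mulVec (v j)))) • Eij v i j) :=
        (Finset.sum_comm).trans (Finset.sum_congr rfl fun i _ => Finset.sum_comm)
      rw [e1, e2]
      refine Finset.sum_congr rfl fun i _ => Finset.sum_congr rfl fun j _ => ?_
      rw [hco i j, Finset.sum_smul]
      exact Finset.sum_congr rfl fun k _ => by rw [rsmul_eq_csmul, smul_smul]
    have hmem : (Rop ρ)^[N] (comm ρ H) ∈ K ρ H N := by
      rw [hMN]
      exact Submodule.sum_mem _ fun k hk' => Submodule.smul_mem _ _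
        (Submodule.subset_span ⟨k, Finset.mem_range.mp hk', rfl⟩)
    apply le_antisymm
    · rw [K, Submodule.span_le]
      rintro x ⟨k, hk, rfl⟩
      simp only [Set.mem_Iio] at hk
      rcases Nat.lt_succ_iff_lt_or_eq.mp hk with h | rfl
      · exact Submodule.subset_span ⟨k, h, rfl⟩
      · exact hmem
    · exact Submodule.span_mono (Set.image_mono (Set.Iio_subset_Iio (Nat.le_succ N)))
  -- lower bound: N ≤ nstar
  have hlower : N ≤ nstar := by
    have hKs : K ρ H (nstar + 1) = K ρ H nstar := hstar.1
    have hmem : (Rop ρ)^[nstar] (comm ρ H) ∈ K ρ H nstar := by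
      rw [← hKs, K]
      exact Submodule.subset_span ⟨nstar, Nat.lt_succ_self _, rfl⟩
    rw [K] at hmem
    obtain ⟨n, f, g, hrep⟩ := Submodule.mem_span_set'.mp hmem
    choose kk hkk hgM using fun t => (g t).2
    have hkk' : ∀ t, kk t < nstar := fun t => Set.mem_Iio.mp (hkk t)
    set q : Polynomial ℝ :=
      Polynomial.X ^ nstar - ∑ t : Fin n, Polynomial.C (f t) * Polynomial.X ^ (kk t) with hq
    have hqcoeff : q.coeff nstar = 1 := by
      rw [hq, Polynomial.coeff_sub, Polynomial.coeff_X_pow, if_pos rfl,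
        Polynomial.finset_sum_coeff]
      have hz : ∀ t ∈ (Finset.univ : Finset (Fin n)),
          (Polynomial.C (f t) * Polynomial.X ^ (kk t)).coeff nstar = 0 := by
        intro t _
        rw [Polynomial.coeff_C_mul, Polynomial.coeff_X_pow,
          if_neg (Ne.symm (Nat.ne_of_lt (hkk' t))), mul_zero]
      rw [Finset.sum_eq_zero hz]
      ring
    have hqne : q ≠ 0 := fun h => by simp [h] at hqcoeff
    have hqdeg : q.natDegree ≤ nstar := by
      refine le_trans (Polynomial.natDegree_sub_le _ _) ?_
      rw [max_le_iff]
      refine ⟨by simp, ?_⟩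
      refine Polynomial.natDegree_sum_le_of_forall_le _ _ fun t _ => ?_
      refine le_trans (Polynomial.natDegree_C_mul_le _ _) ?_
      rw [Polynomial.natDegree_X_pow]
      exact le_of_lt (hkk' t)
    have hroot : ∀ μ ∈ Φ, q.IsRoot μ := by
      intro μ hμ
      obtain ⟨a, ha, hsum⟩ := Finset.mem_image.mp hμ
      obtain ⟨-, hp1, hc1⟩ := Finset.mem_filter.mp ha
      have hphiL := congrArg (phi v a.1 a.2) hrep
      rw [phi_sum] at hphiL
      have hL : ∀ t : Fin n, phi v a.1 a.2 (f t • (g t : Matrix (Fin d) (Fin d) ℂ))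
          = (f t : ℂ) * ((((p a.1 + p a.2) / 2 : ℝ) : ℂ) ^ (kk t) *
            (Complex.I * ((p a.1 : ℂ) - (p a.2 : ℂ)) * (star (v a.1) ⬝ᵥ H.mulVec (v a.2)))) := by
        intro t
        rw [phi_rsmul, ← hgM t]
        rw [phi_iter ρ p v hρ horth H (kk t)]
      rw [Finset.sum_congr rfl fun t _ => hL t,
        phi_iter ρ p v hρ horth H nstar] at hphiL
      have hwne' : Complex.I * ((p a.1 : ℂ) - (p a.2 : ℂ)) *
          (star (v a.1) ⬝ᵥ H.mulVec (v a.2)) ≠ 0 := hwne a.1 a.2 hp1 hc1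
      have hceq : (∑ t : Fin n, (f t : ℂ) * (((p a.1 + p a.2) / 2 : ℝ) : ℂ) ^ (kk t))
          = (((p a.1 + p a.2) / 2 : ℝ) : ℂ) ^ nstar := by
        apply mul_right_cancel₀ hwne'
        rw [Finset.sum_mul, ← hphiL]
        exact Finset.sum_congr rfl fun t _ => by ring
      have hrealeq : (∑ t : Fin n, f t * ((p a.1 + p a.2) / 2) ^ (kk t))
          = ((p a.1 + p a.2) / 2) ^ nstar := by
        apply Complex.ofReal_injective
        push_cast
        push_cast at hceq
        exact hceq
      have hsum' : (p a.1 + p a.2) / 2 = μ := hsum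
      rw [Polynomial.IsRoot, hq]
      rw [Polynomial.eval_sub, Polynomial.eval_pow, Polynomial.eval_X,
        Polynomial.eval_finset_sum]
      rw [← hsum']
      rw [Finset.sum_congr rfl fun t _ => by
        rw [Polynomial.eval_mul, Polynomial.eval_C, Polynomial.eval_pow, Polynomial.eval_X]]
      rw [hrealeq]
      ring
    have hsub : Φ ⊆ q.roots.toFinset := fun μ hμ =>
      Multiset.mem_toFinset.mpr (Polynomial.mem_roots'.mpr ⟨hqne, hroot μ hμ⟩)
    calc N = Φ.card := hN
      _ ≤ q.roots.toFinset.card := Finset.card_le_card hsub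
      _ ≤ Multiset.card q.roots := q.roots.toFinset_card_le
      _ ≤ q.natDegree := q.card_roots'
      _ ≤ nstar := hqdeg
  have hns : nstar = N := le_antisymm (hstar.2 hupper) hlower
  -- arithmetic
  rw [hns]
  set S' : Finset ℝ := (Finset.univ.filter fun kl : Fin d × Fin d => p kl.1 ≠ p kl.2).image
      (fun kl => p kl.1 + p kl.2) with hS'
  have hkey : S'.filter (fun μ => ¬ ∀ i j, p i ≠ p j → p i + p j = μ →
      star (v i) ⬝ᵥ H.mulVec (v j) = 0) = A.image (fun a => p a.1 + p a.2) := by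
    ext μ
    simp only [Finset.mem_filter, Finset.mem_image, Finset.mem_univ, true_and, hS', hA, hc,
      not_forall]
    constructor
    · rintro ⟨-, i, j, h1, h2, h3⟩
      exact ⟨(i, j), ⟨h1, h3⟩, h2⟩
    · rintro ⟨a, ⟨h1, h3⟩, h2⟩
      exact ⟨⟨a, h1, h2⟩, a.1, a.2, h1, h2, h3⟩
  have hinj : Function.Injective (fun x : ℝ => x / 2) := fun a b h => by
    field_simp at h
    exact h
  have hNA : N = (A.image fun a => p a.1 + p a.2).card := by
    rw [hN, hΦ]
    have : (A.image fun a => p a.1 + p a.2).image (fun x : ℝ => x / 2)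
        = A.image (fun a => (p a.1 + p a.2) / 2) := by
      rw [Finset.image_image]
      rfl
    rw [← this, Finset.card_image_of_injective _ hinj]
  have hcards := Finset.card_filter_add_card_filter_not
    (s := S') (p := fun μ => ∀ i j, p i ≠ p j → p i + p j = μ →
      star (v i) ⬝ᵥ H.mulVec (v j) = 0)
  rw [hNA, ← hkey]
  omega

end KST
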